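/- (Theorem 1) Let g, N₀, Γ, λ > 0 and let two users have the same attenuation ℓ > 0, traffic demands T₁, T₂ > 0, and positive bandwidths w₁, w₂ each satisfying the stationarity condition 2^{Tᵢ/wᵢ}·(Tᵢ·ln 2 / wᵢ − 1) = λ·ℓ/(g·N₀·Γ) − 1 with the same multiplier λ. Then w₁/T₁ = w₂/T₂ (bandwidth is proportional to traffic demand), and with pᵢ = (g·N₀·Γ/ℓ)·(2^{Tᵢ/wᵢ} − 1)·wᵢ the power spectral densities are equal: p₁/w₁ = p₂/w₂. -/

import Mathlib

open Real

private lemma f_strictMono :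
    StrictMonoOn (fun x : ℝ => Real.exp (Real.log 2 * x) * (Real.log 2 * x - 1))
      (Set.Ici 0) := by
  have hc : 0 < Real.log 2 := Real.log_pos (by norm_num)
  apply strictMonoOn_of_deriv_pos (convex_Ici 0)
  · fun_prop
  · intro x hx
    rw [interior_Ici] at hx
    have h1 : HasDerivAt (fun x : ℝ => Real.exp (Real.log 2 * x) * (Real.log 2 * x - 1))
        (Real.log 2 * Real.exp (Real.log 2 * x) * (Real.log 2 * x - 1)
          + Real.exp (Real.log 2 * x) * Real.log 2) x := by
      have he : HasDerivAt (fun x : ℝ => Real.exp (Real.log 2 * x))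
          (Real.log 2 * Real.exp (Real.log 2 * x)) x := by
        simpa [mul_comm] using ((hasDerivAt_id x).const_mul (Real.log 2)).exp
      have hl : HasDerivAt (fun x : ℝ => Real.log 2 * x - 1) (Real.log 2) x := by
        simpa using ((hasDerivAt_id x).const_mul (Real.log 2)).sub_const 1
      exact he.mul hl
    rw [h1.deriv]
    have : Real.log 2 * Real.exp (Real.log 2 * x) * (Real.log 2 * x - 1)
        + Real.exp (Real.log 2 * x) * Real.log 2
        = Real.exp (Real.log 2 * x) * (Real.log 2 * Real.log 2 * x) := by ring
    rw [this]
    exact mul_pos (Real.exp_pos _) (mul_pos (mul_pos hc hc) hx)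

/-- (Theorem 1) Two users with the same attenuation `ℓ` whose bandwidths satisfy the
stationarity condition with the same multiplier `λ` have bandwidth proportional to
traffic demand, and equal power spectral densities. -/
theorem stmt_3 (g N₀ Γ ℓ lam T₁ T₂ w₁ w₂ : ℝ)
    (hg : 0 < g) (hN₀ : 0 < N₀) (hΓ : 0 < Γ) (hℓ : 0 < ℓ) (hlam : 0 < lam)
    (hT₁ : 0 < T₁) (hT₂ : 0 < T₂) (hw₁ : 0 < w₁) (hw₂ : 0 < w₂)
    (hs₁ : (2 : ℝ) ^ (T₁ / w₁) * (T₁ * Real.log 2 / w₁ - 1) = lam * ℓ / (g * N₀ * Γ) - 1)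
    (hs₂ : (2 : ℝ) ^ (T₂ / w₂) * (T₂ * Real.log 2 / w₂ - 1) = lam * ℓ / (g * N₀ * Γ) - 1) :
    w₁ / T₁ = w₂ / T₂ ∧
    (g * N₀ * Γ / ℓ * ((2 : ℝ) ^ (T₁ / w₁) - 1) * w₁) / w₁ =
      (g * N₀ * Γ / ℓ * ((2 : ℝ) ^ (T₂ / w₂) - 1) * w₂) / w₂ := by
  set x₁ := T₁ / w₁ with hx₁def
  set x₂ := T₂ / w₂ with hx₂def
  have hx₁ : 0 < x₁ := div_pos hT₁ hw₁
  have hx₂ : 0 < x₂ := div_pos hT₂ hw₂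
  have hrw : ∀ x : ℝ, (2 : ℝ) ^ x = Real.exp (Real.log 2 * x) := fun x =>
    Real.rpow_def_of_pos (by norm_num) x
  have h1 : T₁ * Real.log 2 / w₁ = Real.log 2 * x₁ := by rw [hx₁def]; ring
  have h2 : T₂ * Real.log 2 / w₂ = Real.log 2 * x₂ := by rw [hx₂def]; ring
  have heq : Real.exp (Real.log 2 * x₁) * (Real.log 2 * x₁ - 1)
      = Real.exp (Real.log 2 * x₂) * (Real.log 2 * x₂ - 1) := by
    rw [← hrw, ← hrw, ← h1, ← h2, hs₁, hs₂]
  have hx : x₁ = x₂ :=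
    f_strictMono.injOn (Set.mem_Ici.2 hx₁.le) (Set.mem_Ici.2 hx₂.le) heq
  constructor
  · rw [div_eq_div_iff hT₁.ne' hT₂.ne']
    have := hx
    rw [hx₁def, hx₂def, div_eq_div_iff hw₁.ne' hw₂.ne'] at this
    linarith
  · rw [hx]; field_simp
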